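/- For 1 < α < 2 and N ≥ 2, let T_α be the real symmetric (N−1)×(N−1) Toeplitz matrix with entries (T_α)_{ij} = g_{|i−j|}^α, where g_k^α = (−1)^k Γ(1+α) / (Γ(α/2 − k + 1) Γ(α/2 + k + 1)). Then T_α is positive definite. -/

import Mathlib

/-- The fractional centered difference coefficients
`g_k^α = (−1)^k Γ(1+α) / (Γ(α/2 − k + 1) Γ(α/2 + k + 1))`. -/
noncomputable def gcoef (α : ℝ) (k : ℤ) : ℝ :=
  (-1 : ℝ) ^ k * Real.Gamma (1 + α) /
    (Real.Gamma (α / 2 - (k : ℝ) + 1) * Real.Gamma (α / 2 + (k : ℝ) + 1))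

namespace Stmt18

variable {α : ℝ}

/-- `g` restricted to natural indices. -/
noncomputable def g (α : ℝ) (k : ℕ) : ℝ := gcoef α (k : ℤ)

/-- The telescoping sequence `u k = (-1)^k Γ(α) / (Γ(α/2-k) Γ(α/2+k+1))`. -/
noncomputable def u (α : ℝ) (k : ℕ) : ℝ :=
  (-1 : ℝ) ^ k * Real.Gamma α / (Real.Gamma (α / 2 - k) * Real.Gamma (α / 2 + k + 1))

lemma g_eq (k : ℕ) : g α k =
    (-1 : ℝ) ^ k * Real.Gamma (1 + α) /
      (Real.Gamma (α / 2 - (k : ℝ) + 1) * Real.Gamma (α / 2 + (k : ℝ) + 1)) := by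
  simp [g, gcoef, zpow_natCast]

section assum
variable (hα₁ : 1 < α) (hα₂ : α < 2)
include hα₁ hα₂

lemma gamma_right_pos (x : ℝ) (hx : 0 ≤ x) : 0 < Real.Gamma (α / 2 + x) :=
  Real.Gamma_pos_of_pos (by linarith)

lemma gamma_sign (k : ℕ) : 0 < (-1 : ℝ) ^ k * Real.Gamma (α / 2 - k) := by
  induction k with
  | zero => simpa using Real.Gamma_pos_of_pos (by linarith : (0:ℝ) < α / 2)
  | succ k ih =>
    have hx : α / 2 - (k + 1 : ℕ) < 0 := by
      push_cast
      have : (0:ℝ) ≤ (k:ℝ) := Nat.cast_nonneg k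
      linarith
    have key : Real.Gamma (α / 2 - k) =
        (α / 2 - ((k:ℕ) + 1 : ℕ)) * Real.Gamma (α / 2 - ((k:ℕ) + 1 : ℕ)) := by
      have h := Real.Gamma_add_one (ne_of_lt hx)
      rw [← h]; congr 1; push_cast; ring
    rw [key] at ih
    rcases neg_one_pow_eq_or ℝ k with h | h
    · rw [h, one_mul] at ih
      have hP : Real.Gamma (α / 2 - ((k:ℕ) + 1 : ℕ)) < 0 := by nlinarith
      have : ((-1:ℝ)) ^ (k+1) = -1 := by rw [pow_succ, h]; ring
      rw [this]; push_cast at hP ⊢; nlinarith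
    · rw [h] at ih
      have hP : 0 < Real.Gamma (α / 2 - ((k:ℕ) + 1 : ℕ)) := by nlinarith
      have : ((-1:ℝ)) ^ (k+1) = 1 := by rw [pow_succ, h]; ring
      rw [this]; push_cast at hP ⊢; nlinarith

lemma gamma_left_ne (k : ℕ) : Real.Gamma (α / 2 - k) ≠ 0 := by
  intro h
  have := gamma_sign hα₁ hα₂ k
  rw [h, mul_zero] at this
  exact lt_irrefl _ this

lemma u_pos (k : ℕ) : 0 < u α k := by
  have hΓα : 0 < Real.Gamma α := Real.Gamma_pos_of_pos (by linarith)
  have hG2 : 0 < Real.Gamma (α / 2 + k + 1) := by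
    rw [add_assoc]; exact gamma_right_pos hα₁ hα₂ (k + 1) (by positivity)
  have hs := gamma_sign hα₁ hα₂ k
  rcases neg_one_pow_eq_or ℝ k with h | h
  · rw [h, one_mul] at hs
    unfold u; rw [h, one_mul]
    positivity
  · rw [h] at hs
    have hG1 : Real.Gamma (α / 2 - k) < 0 := by nlinarith
    unfold u; rw [h]
    rw [neg_one_mul, neg_div]
    have : Real.Gamma (α / 2 - ↑k) * Real.Gamma (α / 2 + ↑k + 1) < 0 :=
      mul_neg_of_neg_of_pos hG1 hG2
    exact neg_pos.mpr (div_neg_of_pos_of_neg hΓα this)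

lemma g_succ (k : ℕ) : g α (k + 1) = u α (k + 1) - u α k := by
  have hΓα : 0 < Real.Gamma α := Real.Gamma_pos_of_pos (by linarith)
  have ha : α / 2 - ((k:ℝ) + 1) < 0 := by
    have : (0:ℝ) ≤ (k:ℝ) := Nat.cast_nonneg k
    linarith
  have hb : (0:ℝ) < α / 2 + (k:ℝ) + 1 := by
    have : (0:ℝ) ≤ (k:ℝ) := Nat.cast_nonneg k
    linarith
  have hG1ne : Real.Gamma (α / 2 - ((k:ℝ) + 1)) ≠ 0 := by
    have := gamma_left_ne hα₁ hα₂ (k + 1)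
    push_cast at this; exact this
  have hG2 : 0 < Real.Gamma (α / 2 + (k:ℝ) + 1) := by
    rw [add_assoc]; exact gamma_right_pos hα₁ hα₂ (k + 1) (by positivity)
  have hG2ne : Real.Gamma (α / 2 + (k:ℝ) + 1) ≠ 0 := ne_of_gt hG2
  have hGα : Real.Gamma (1 + α) = α * Real.Gamma α := by
    rw [add_comm]; exact Real.Gamma_add_one (by positivity)
  have e1 : Real.Gamma (α / 2 - ((k:ℝ) + 1) + 1) =
      (α / 2 - ((k:ℝ) + 1)) * Real.Gamma (α / 2 - ((k:ℝ) + 1)) :=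
    Real.Gamma_add_one (ne_of_lt ha)
  have e2 : Real.Gamma (α / 2 + ((k:ℝ) + 1) + 1) =
      (α / 2 + (k:ℝ) + 1) * Real.Gamma (α / 2 + (k:ℝ) + 1) := by
    rw [show α / 2 + ((k:ℝ) + 1) + 1 = (α / 2 + (k:ℝ) + 1) + 1 by ring]
    exact Real.Gamma_add_one (ne_of_gt hb)
  have e3 : Real.Gamma (α / 2 - (k:ℝ)) =
      (α / 2 - ((k:ℝ) + 1)) * Real.Gamma (α / 2 - ((k:ℝ) + 1)) := by
    rw [show α / 2 - (k:ℝ) = (α / 2 - ((k:ℝ) + 1)) + 1 by ring]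
    exact Real.Gamma_add_one (ne_of_lt ha)
  have hane : α / 2 - ((k:ℝ) + 1) ≠ 0 := ne_of_lt ha
  have hbne : α / 2 + (k:ℝ) + 1 ≠ 0 := ne_of_gt hb
  have hne1 : Real.Gamma (α / 2 - ((k:ℝ) + 1)) *
      ((α / 2 + (k:ℝ) + 1) * Real.Gamma (α / 2 + (k:ℝ) + 1)) ≠ 0 :=
    mul_ne_zero hG1ne (mul_ne_zero hbne hG2ne)
  have hne2 : (α / 2 - ((k:ℝ) + 1)) * Real.Gamma (α / 2 - ((k:ℝ) + 1)) *
      Real.Gamma (α / 2 + (k:ℝ) + 1) ≠ 0 :=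
    mul_ne_zero (mul_ne_zero hane hG1ne) hG2ne
  have hne3 : (α / 2 - ((k:ℝ) + 1)) * Real.Gamma (α / 2 - ((k:ℝ) + 1)) *
      ((α / 2 + (k:ℝ) + 1) * Real.Gamma (α / 2 + (k:ℝ) + 1)) ≠ 0 :=
    mul_ne_zero (mul_ne_zero hane hG1ne) (mul_ne_zero hbne hG2ne)
  have hne4 : Real.Gamma (α / 2 - ((k:ℝ) + 1)) *
      ((α / 2 + (k:ℝ) + 1) * Real.Gamma (α / 2 + (k:ℝ) + 1)) *
      ((α / 2 - ((k:ℝ) + 1)) * Real.Gamma (α / 2 - ((k:ℝ) + 1)) *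
        Real.Gamma (α / 2 + (k:ℝ) + 1)) ≠ 0 := mul_ne_zero hne1 hne2
  rw [g_eq]
  unfold u
  push_cast
  rw [e1, e2, e3, hGα, pow_succ]
  rw [div_sub_div _ _ hne1 hne2, div_eq_div_iff hne3 hne4]
  ring

lemma g_zero : g α 0 = 2 * u α 0 := by
  have hΓα : 0 < Real.Gamma α := Real.Gamma_pos_of_pos (by linarith)
  have hG0 : 0 < Real.Gamma (α / 2) := Real.Gamma_pos_of_pos (by linarith)
  have hGα : Real.Gamma (1 + α) = α * Real.Gamma α := by
    rw [add_comm]; exact Real.Gamma_add_one (by positivity)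
  have e1 : Real.Gamma (α / 2 + 1) = (α / 2) * Real.Gamma (α / 2) :=
    Real.Gamma_add_one (by positivity)
  rw [g_eq]
  unfold u
  simp only [Nat.cast_zero, pow_zero, one_mul, sub_zero, add_zero]
  rw [e1, hGα]
  field_simp

lemma g_succ_neg (k : ℕ) : g α (k + 1) < 0 := by
  have hGα : 0 < Real.Gamma (1 + α) := Real.Gamma_pos_of_pos (by linarith)
  have hG2 : 0 < Real.Gamma (α / 2 + ((k:ℝ) + 1) + 1) := by
    have : (0:ℝ) ≤ (k:ℝ) := Nat.cast_nonneg k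
    exact Real.Gamma_pos_of_pos (by linarith)
  have hs := gamma_sign hα₁ hα₂ k
  have e1 : Real.Gamma (α / 2 - ((k:ℝ) + 1) + 1) = Real.Gamma (α / 2 - (k:ℝ)) := by
    congr 1; ring
  rw [g_eq]
  push_cast
  rw [e1, pow_succ]
  rcases neg_one_pow_eq_or ℝ k with h | h <;> rw [h] at hs ⊢
  · rw [one_mul] at hs
    have : Real.Gamma (α / 2 - (k:ℝ)) * Real.Gamma (α / 2 + ((k:ℝ) + 1) + 1) > 0 :=
      mul_pos hs hG2
    rw [one_mul, neg_one_mul, neg_div]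
    exact neg_lt_zero.mpr (div_pos hGα this)
  · have hG1 : Real.Gamma (α / 2 - (k:ℝ)) < 0 := by nlinarith
    have : Real.Gamma (α / 2 - (k:ℝ)) * Real.Gamma (α / 2 + ((k:ℝ) + 1) + 1) < 0 :=
      mul_neg_of_neg_of_pos hG1 hG2
    rw [neg_one_mul, neg_neg, one_mul]
    exact div_neg_of_pos_of_neg hGα this

lemma sum_telescope (M : ℕ) :
    g α 0 + 2 * ∑ k ∈ Finset.range M, g α (k + 1) = 2 * u α M := by
  have : ∑ k ∈ Finset.range M, g α (k + 1) = u α M - u α 0 := by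
    rw [← Finset.sum_range_sub (u α) M]
    exact Finset.sum_congr rfl fun k _ => g_succ hα₁ hα₂ k
  rw [this, g_zero hα₁ hα₂]
  ring

end assum
end Stmt18


open Stmt18 in
theorem stmt_18 (α : ℝ) (hα₁ : 1 < α) (hα₂ : α < 2) (N : ℕ) (hN : 2 ≤ N)
    (T : Matrix (Fin (N - 1)) (Fin (N - 1)) ℝ)
    (hT : ∀ i j, T i j = gcoef α |(i : ℤ) - (j : ℤ)|) :
    T.PosDef := by
  classical
  have hTg : ∀ i j : Fin (N - 1), T i j = g α ((i:ℤ) - (j:ℤ)).natAbs := by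
    intro i j
    rw [hT, Stmt18.g, Int.abs_eq_natAbs]
  have hTneg : ∀ i j : Fin (N - 1), i ≠ j → T i j < 0 := by
    intro i j hij
    have hd : ((i:ℤ) - (j:ℤ)).natAbs ≠ 0 := by
      have : (i:ℕ) ≠ (j:ℕ) := fun h => hij (Fin.ext h)
      omega
    obtain ⟨k, hk⟩ := Nat.exists_eq_succ_of_ne_zero hd
    rw [hTg, hk]
    exact g_succ_neg hα₁ hα₂ k
  have hsymm : ∀ i j : Fin (N - 1), T j i = T i j := by
    intro i j
    rw [hTg, hTg]
    congr 1
    omega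
  have hHerm : T.IsHermitian := by
    ext i j
    simp only [Matrix.conjTranspose_apply, star_trivial]
    exact hsymm i j
  set L : ℝ := ∑ k ∈ Finset.range (N - 2), -(g α (k + 1)) with hL
  have hgneg : ∀ k : ℕ, (0:ℝ) ≤ -(g α (k + 1)) :=
    fun k => by linarith [g_succ_neg hα₁ hα₂ (α := α) k]
  have hrow : ∀ i : Fin (N - 1), ∑ j ∈ Finset.univ.erase i, -(T i j) ≤ 2 * L := by
    intro i
    have hi := i.isLt
    have hsplit : (Finset.univ.erase i : Finset (Fin (N - 1))) =
        (Finset.univ.filter (fun j : Fin (N - 1) => (j:ℕ) < (i:ℕ))) ∪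
        (Finset.univ.filter (fun j : Fin (N - 1) => (i:ℕ) < (j:ℕ))) := by
      ext j
      simp only [Finset.mem_erase, Finset.mem_union, Finset.mem_filter, Finset.mem_univ,
        true_and, and_true, ne_eq, Fin.ext_iff]
      omega
    have hdisj : Disjoint (Finset.univ.filter (fun j : Fin (N - 1) => (j:ℕ) < (i:ℕ)))
        (Finset.univ.filter (fun j : Fin (N - 1) => (i:ℕ) < (j:ℕ))) := by
      rw [Finset.disjoint_filter]
      intro j _ h1
      omega
    rw [hsplit, Finset.sum_union hdisj]
    have h1 : ∑ j ∈ Finset.univ.filter (fun j : Fin (N - 1) => (j:ℕ) < (i:ℕ)), -(T i j) =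
        ∑ k ∈ Finset.range (i:ℕ), -(g α (k + 1)) := by
      refine Finset.sum_nbij' (fun j => (i:ℕ) - (j:ℕ) - 1)
        (fun k => (⟨(i:ℕ) - k - 1, by omega⟩ : Fin (N - 1))) ?_ ?_ ?_ ?_ ?_
      · intro j hj
        simp only [Finset.mem_filter, Finset.mem_univ, true_and] at hj
        simp only [Finset.mem_range]
        omega
      · intro k hk
        simp only [Finset.mem_range] at hk
        simp only [Finset.mem_filter, Finset.mem_univ, true_and, Fin.val_mk]
        omega
      · intro j hj
        simp only [Finset.mem_filter, Finset.mem_univ, true_and] at hj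
        apply Fin.ext
        simp only [Fin.val_mk]
        beta_reduce
        omega
      · intro k hk
        simp only [Finset.mem_range] at hk
        simp only [Fin.val_mk]
        beta_reduce
        omega
      · intro j hj
        simp only [Finset.mem_filter, Finset.mem_univ, true_and] at hj
        rw [hTg]
        congr 2
        beta_reduce
        omega
    have h2 : ∑ j ∈ Finset.univ.filter (fun j : Fin (N - 1) => (i:ℕ) < (j:ℕ)), -(T i j) =
        ∑ k ∈ Finset.range ((N - 1) - (i:ℕ) - 1), -(g α (k + 1)) := by
      refine Finset.sum_nbij' (fun j => (j:ℕ) - (i:ℕ) - 1)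
        (fun k => (⟨min ((i:ℕ) + k + 1) (N - 2), by omega⟩ : Fin (N - 1))) ?_ ?_ ?_ ?_ ?_
      · intro j hj
        simp only [Finset.mem_filter, Finset.mem_univ, true_and] at hj
        simp only [Finset.mem_range]
        have := j.isLt
        omega
      · intro k hk
        simp only [Finset.mem_range] at hk
        simp only [Finset.mem_filter, Finset.mem_univ, true_and, Fin.val_mk]
        omega
      · intro j hj
        simp only [Finset.mem_filter, Finset.mem_univ, true_and] at hj
        apply Fin.ext
        simp only [Fin.val_mk]
        beta_reduce
        omega
      · intro k hk
        simp only [Finset.mem_range] at hk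
        simp only [Fin.val_mk]
        beta_reduce
        omega
      · intro j hj
        simp only [Finset.mem_filter, Finset.mem_univ, true_and] at hj
        rw [hTg]
        congr 2
        beta_reduce
        omega
    have hle1 : ∑ k ∈ Finset.range (i:ℕ), -(g α (k + 1)) ≤ L := by
      refine Finset.sum_le_sum_of_subset_of_nonneg
        (Finset.range_subset_range.2 (by omega)) fun k _ _ => hgneg k
    have hle2 : ∑ k ∈ Finset.range ((N - 1) - (i:ℕ) - 1), -(g α (k + 1)) ≤ L := by
      refine Finset.sum_le_sum_of_subset_of_nonneg
        (Finset.range_subset_range.2 (by omega)) fun k _ _ => hgneg k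
    rw [h1, h2]
    linarith
  have hGL : 2 * u α (N - 2) ≤ g α 0 - 2 * L := by
    have htel := sum_telescope hα₁ hα₂ (α := α) (N - 2)
    have : L = -∑ k ∈ Finset.range (N - 2), g α (k + 1) := by
      rw [hL, ← Finset.sum_neg_distrib]
    rw [this]
    linarith
  have hU : 0 < u α (N - 2) := u_pos hα₁ hα₂ _
  refine Matrix.PosDef.of_dotProduct_mulVec_pos hHerm ?_
  intro x hx
  have hQ : dotProduct (star x) (Matrix.mulVec T x) =
      ∑ i, ∑ j, T i j * (x i * x j) := by
    simp only [dotProduct, Matrix.mulVec, Pi.star_apply, star_trivial,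
      Finset.mul_sum]
    exact Finset.sum_congr rfl fun i _ => Finset.sum_congr rfl fun j _ => by ring
  rw [hQ]
  have step1 : ∀ i : Fin (N - 1),
      g α 0 * x i ^ 2 + ∑ j ∈ Finset.univ.erase i, T i j * ((x i ^ 2 + x j ^ 2) / 2)
        ≤ ∑ j, T i j * (x i * x j) := by
    intro i
    rw [← Finset.add_sum_erase _ _ (Finset.mem_univ i)]
    have hdiag : T i i = g α 0 := by
      rw [hTg]; norm_num
    have hdd : T i i * (x i * x i) = g α 0 * x i ^ 2 := by
      rw [hdiag]; ring
    rw [hdd]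
    refine (add_le_add_iff_left _).2 (Finset.sum_le_sum fun j hj => ?_)
    have hj' : j ≠ i := (Finset.mem_erase.1 hj).1
    have hneg : T i j ≤ 0 := le_of_lt (hTneg i j (Ne.symm hj'))
    nlinarith [sq_nonneg (x i - x j)]
  have hswap : ∑ i : Fin (N - 1), ∑ j ∈ Finset.univ.erase i, T i j * x j ^ 2
      = ∑ i : Fin (N - 1), ∑ j ∈ Finset.univ.erase i, T i j * x i ^ 2 := by
    rw [Finset.sum_comm' (t' := Finset.univ) (s' := fun j => Finset.univ.erase j)
      (by intro a b; simp only [Finset.mem_univ, Finset.mem_erase, ne_eq, true_and,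
        and_true]; exact ⟨fun h => Ne.symm h, fun h => Ne.symm h⟩)]
    exact Finset.sum_congr rfl fun j _ => Finset.sum_congr rfl fun i _ => by
      rw [hsymm]
  have step2 : ∀ i : Fin (N - 1),
      (2 * u α (N - 2)) * x i ^ 2 ≤ (g α 0 + ∑ j ∈ Finset.univ.erase i, T i j) * x i ^ 2 := by
    intro i
    have h := hrow i
    rw [Finset.sum_neg_distrib] at h
    have : g α 0 - 2 * L ≤ g α 0 + ∑ j ∈ Finset.univ.erase i, T i j := by linarith
    nlinarith [sq_nonneg (x i), hGL]
  have hA : ∀ i : Fin (N - 1), ∑ j ∈ Finset.univ.erase i, T i j * ((x i ^ 2 + x j ^ 2) / 2)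
      = (∑ j ∈ Finset.univ.erase i, T i j * x i ^ 2) / 2
        + (∑ j ∈ Finset.univ.erase i, T i j * x j ^ 2) / 2 := by
    intro i
    rw [Finset.sum_div, Finset.sum_div, ← Finset.sum_add_distrib]
    exact Finset.sum_congr rfl fun j _ => by ring
  have E : ∑ i : Fin (N - 1), (g α 0 * x i ^ 2 +
        ∑ j ∈ Finset.univ.erase i, T i j * ((x i ^ 2 + x j ^ 2) / 2))
      = ∑ i : Fin (N - 1), (g α 0 + ∑ j ∈ Finset.univ.erase i, T i j) * x i ^ 2 := by
    rw [Finset.sum_add_distrib]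
    simp only [hA]
    rw [Finset.sum_add_distrib, ← Finset.sum_div, ← Finset.sum_div, hswap]
    have hexp : ∀ i : Fin (N - 1), (g α 0 + ∑ j ∈ Finset.univ.erase i, T i j) * x i ^ 2
        = g α 0 * x i ^ 2 + ∑ j ∈ Finset.univ.erase i, T i j * x i ^ 2 := by
      intro i; rw [add_mul, Finset.sum_mul]
    simp only [hexp]
    rw [Finset.sum_add_distrib]
    ring
  calc (0:ℝ) < ∑ i : Fin (N - 1), (2 * u α (N - 2)) * x i ^ 2 := by
        obtain ⟨i₀, hi₀⟩ := Function.ne_iff.1 hx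
        refine Finset.sum_pos' (fun i _ => by nlinarith [sq_nonneg (x i)])
          ⟨i₀, Finset.mem_univ _, ?_⟩
        have hi₀' : x i₀ ≠ 0 := by simpa using hi₀
        have h2 : (0:ℝ) < x i₀ ^ 2 :=
          lt_of_le_of_ne (sq_nonneg _) (Ne.symm (pow_ne_zero 2 hi₀'))
        nlinarith
    _ ≤ ∑ i : Fin (N - 1), (g α 0 + ∑ j ∈ Finset.univ.erase i, T i j) * x i ^ 2 :=
        Finset.sum_le_sum fun i _ => step2 i
    _ = ∑ i : Fin (N - 1), (g α 0 * x i ^ 2 +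
          ∑ j ∈ Finset.univ.erase i, T i j * ((x i ^ 2 + x j ^ 2) / 2)) := E.symm
    _ ≤ ∑ i, ∑ j, T i j * (x i * x j) := Finset.sum_le_sum fun i _ => step1 i
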